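/- Let D be an H-colored digraph and 𝔉 an H-class partition of A(D) such that for every F∈𝔉 the subdigraph D⟨F⟩ is strongly connected and contains a vertex that is obstruction-free in D. Then for every k≥2, D has a (k,H)-kernel by walks. -/

import Mathlib

universe u v

/-- A walk of length `n` in the digraph with arc relation `R`;
its vertices are `x 0, x 1, …, x n`. -/
def IsWalk {α : Type u} (R : α → α → Prop) (x : ℕ → α) (n : ℕ) : Prop :=
  ∀ i < n, R (x i) (x (i + 1))

/-- A (directed) path: a walk whose vertices `x 0, …, x n` are pairwise distinct. -/
def IsPath {α : Type u} (R : α → α → Prop) (x : ℕ → α) (n : ℕ) : Prop :=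
  IsWalk R x n ∧ ∀ i ≤ n, ∀ j ≤ n, x i = x j → i = j

/-- There is a directed path from `u` to `v` in the digraph with arc relation `R`. -/
def ExistsPath {α : Type u} (R : α → α → Prop) (u v : α) : Prop :=
  ∃ x n, IsPath R x n ∧ x 0 = u ∧ x n = v

/-- A cycle of length `n` in the digraph with arc relation `R`. -/
def IsCycle {α : Type u} (R : α → α → Prop) (x : ℕ → α) (n : ℕ) : Prop :=
  1 ≤ n ∧ IsWalk R x n ∧ x n = x 0 ∧ ∀ i < n, ∀ j < n, x i = x j → i = j

/-- The digraph with vertex set `Vs` and arc relation `R` is strongly connected: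
any two vertices are joined by directed paths in both directions. -/
def StronglyConnectedOn {α : Type u} (R : α → α → Prop) (Vs : Set α) : Prop :=
  ∀ u ∈ Vs, ∀ v ∈ Vs, ExistsPath R u v

/-- The digraph with vertex set `Vs` and arc relation `R` is unilateral:
any two vertices are joined by a directed path in at least one direction. -/
def UnilateralOn {α : Type u} (R : α → α → Prop) (Vs : Set α) : Prop :=
  ∀ u ∈ Vs, ∀ v ∈ Vs, ExistsPath R u v ∨ ExistsPath R v u

/-- A kernel by paths of the digraph with vertex set `Vs` and arc relation `R`:
no directed path joins two distinct vertices of `K`, and every vertex of `Vs`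
not in `K` has a directed path to a vertex of `K`. -/
def KernelByPaths {α : Type u} (R : α → α → Prop) (Vs : Set α) (K : Set α) : Prop :=
  K ⊆ Vs ∧
  (∀ u ∈ K, ∀ v ∈ K, u ≠ v → ¬ ExistsPath R u v) ∧
  (∀ u ∈ Vs, u ∉ K → ∃ v ∈ K, ExistsPath R u v)

/-- A `(k,l)`-kernel of the digraph with vertex set `Vs` and arc relation `R`:
every walk between two distinct vertices of `S` has length at least `k`, and
every vertex not in `S` has a walk of length at most `l` to a vertex of `S`. -/
def klKernel {α : Type u} (R : α → α → Prop) (Vs : Set α) (k l : ℕ) (S : Set α) : Prop :=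
  S ⊆ Vs ∧
  (∀ u ∈ S, ∀ v ∈ S, u ≠ v → ∀ x n, IsWalk R x n → x 0 = u → x n = v → k ≤ n) ∧
  (∀ u ∈ Vs, u ∉ S → ∃ v ∈ S, ∃ x n, IsWalk R x n ∧ x 0 = u ∧ x n = v ∧ n ≤ l)

/-- An independent set of the digraph with vertex set `Vs` and arc relation `R`:
there is no arc between two distinct vertices of `S`. -/
def IndependentOn {α : Type u} (R : α → α → Prop) (Vs : Set α) (S : Set α) : Prop :=
  S ⊆ Vs ∧ ∀ u ∈ S, ∀ v ∈ S, u ≠ v → ¬ R u v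

/-- An `l`-absorbent set of the digraph with vertex set `Vs` and arc relation `R`. -/
def lAbsorbentOn {α : Type u} (R : α → α → Prop) (Vs : Set α) (l : ℕ) (S : Set α) : Prop :=
  ∀ u ∈ Vs, u ∉ S → ∃ v ∈ S, ∃ x n, IsWalk R x n ∧ x 0 = u ∧ x n = v ∧ n ≤ l

section HColored

variable {V : Type u} {C : Type v}

/-- The arc relation of the subdigraph arc-induced by a set `F` of arcs. -/
def memRel (F : Set (V × V)) : V → V → Prop := fun a b => (a, b) ∈ F

/-- The vertex set of the subdigraph `D⟨F⟩` arc-induced by a set `F` of arcs. -/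
def classVerts (F : Set (V × V)) : Set V := {a | ∃ b, (a, b) ∈ F ∨ (b, a) ∈ F}

/-- The set of obstruction indices of the open walk `x 0, …, x n` in the
`H`-colored digraph with coloring `ρ`, where `HA` is the arc relation of `H`. -/
def obstructions (HA : C → C → Prop) (ρ : V → V → C) (x : ℕ → V) (n : ℕ) : Set ℕ :=
  {i | 1 ≤ i ∧ i < n ∧ ¬ HA (ρ (x (i - 1)) (x i)) (ρ (x i) (x (i + 1)))}

/-- The `H`-length of the open walk `x 0, …, x n`: the number of obstructions plus one. -/
noncomputable def hLength (HA : C → C → Prop) (ρ : V → V → C) (x : ℕ → V) (n : ℕ) : ℕ :=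
  (obstructions HA ρ x n).ncard + 1

/-- `S` is `(k,H)`-independent by walks: every walk between two distinct
vertices of `S` has `H`-length at least `k`. -/
def kHIndependentByWalks (DA : V → V → Prop) (HA : C → C → Prop) (ρ : V → V → C)
    (k : ℕ) (S : Set V) : Prop :=
  ∀ u ∈ S, ∀ v ∈ S, u ≠ v →
    ∀ x n, IsWalk DA x n → x 0 = u → x n = v → k ≤ hLength HA ρ x n

/-- `S` is `(l,H)`-absorbent by walks: every vertex not in `S` has a walk to a
vertex of `S` of `H`-length at most `l`. -/
def lHAbsorbentByWalks (DA : V → V → Prop) (HA : C → C → Prop) (ρ : V → V → C)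
    (l : ℕ) (S : Set V) : Prop :=
  ∀ u, u ∉ S → ∃ v ∈ S, ∃ x n, IsWalk DA x n ∧ x 0 = u ∧ x n = v ∧ hLength HA ρ x n ≤ l

/-- A `(k,l,H)`-kernel by walks. -/
def klHKernelByWalks (DA : V → V → Prop) (HA : C → C → Prop) (ρ : V → V → C)
    (k l : ℕ) (S : Set V) : Prop :=
  kHIndependentByWalks DA HA ρ k S ∧ lHAbsorbentByWalks DA HA ρ l S

/-- `𝔉` is an `H`-class partition of the arc set of `D`: it is a partition of the
arc set, and two consecutive arcs form an `H`-arc of colors iff they lie in a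
common class. -/
def IsHClassPartition (DA : V → V → Prop) (HA : C → C → Prop) (ρ : V → V → C)
    (𝔉 : Set (Set (V × V))) : Prop :=
  (∀ F ∈ 𝔉, F.Nonempty ∧ ∀ p ∈ F, DA p.1 p.2) ∧
  (∀ u v : V, DA u v → ∃! F, F ∈ 𝔉 ∧ (u, v) ∈ F) ∧
  (∀ u v w : V, DA u v → DA v w →
    (HA (ρ u v) (ρ v w) ↔ ∃ F ∈ 𝔉, (u, v) ∈ F ∧ (v, w) ∈ F))

/-- There exist arcs `(u,v) ∈ F` and `(v,w) ∈ G`. -/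
def classArc (F G : Set (V × V)) : Prop := ∃ u v w : V, (u, v) ∈ F ∧ (v, w) ∈ G

/-- The arc relation of the `H`-class digraph `C_𝔉(D)` (whose vertex set is `𝔉`). -/
def CRel (𝔉 : Set (Set (V × V))) : Set (V × V) → Set (V × V) → Prop :=
  fun F G => F ∈ 𝔉 ∧ G ∈ 𝔉 ∧ classArc F G

/-- `𝔉` is walk-preservative: for every arc `(F,G)` of `C_𝔉(D)` and every vertex
`z` of `D⟨F⟩` there is a directed path in `D⟨F⟩` from `z` to some vertex of `D⟨G⟩`. -/
def WalkPreservative (𝔉 : Set (Set (V × V))) : Prop :=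
  ∀ F ∈ 𝔉, ∀ G ∈ 𝔉, classArc F G → ∀ z ∈ classVerts F,
    ∃ w ∈ classVerts G, ExistsPath (memRel F) z w

/-- `N⁺(𝒮)`: the classes outside `𝒮` receiving an arc of `C_𝔉(D)` from `𝒮`. -/
def outNbhd (𝔉 𝒮 : Set (Set (V × V))) : Set (Set (V × V)) :=
  {G | G ∈ 𝔉 ∧ G ∉ 𝒮 ∧ ∃ F ∈ 𝒮, classArc F G}

/-- `N⁻_𝔉(x)`: the classes containing an arc entering `x`. -/
def inClasses (𝔉 : Set (Set (V × V))) (x : V) : Set (Set (V × V)) :=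
  {F | F ∈ 𝔉 ∧ ∃ u, (u, x) ∈ F}

/-- `N⁺_𝔉(x)`: the classes containing an arc leaving `x`. -/
def outClasses (𝔉 : Set (Set (V × V))) (x : V) : Set (Set (V × V)) :=
  {F | F ∈ 𝔉 ∧ ∃ v, (x, v) ∈ F}

/-- `N_𝔉(x) = N⁻_𝔉(x) ∪ N⁺_𝔉(x)`. -/
def nbhdClasses (𝔉 : Set (Set (V × V))) (x : V) : Set (Set (V × V)) :=
  inClasses 𝔉 x ∪ outClasses 𝔉 x

/-- `x` is obstruction-free in `D`: every arc entering `x` followed by every arc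
leaving `x` is an `H`-arc of colors. -/
def ObstructionFree (DA : V → V → Prop) (HA : C → C → Prop) (ρ : V → V → C) (x : V) : Prop :=
  ∀ u w, DA u x → DA x w → HA (ρ u x) (ρ x w)

/-- `C_𝔉(D)` has no sinks: every class has an out-arc to a different class. -/
def CNoSinks (𝔉 : Set (Set (V × V))) : Prop :=
  ∀ F ∈ 𝔉, ∃ G ∈ 𝔉, G ≠ F ∧ classArc F G

/-- The (loopless) subdigraph `D⟨F⟩` has no sinks. -/
def NoSinksIn (F : Set (V × V)) : Prop :=
  ∀ x ∈ classVerts F, ∃ y, (x, y) ∈ F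

end HColored

section Aux

variable {V : Type u} {C : Type v} (DA : V → V → Prop) (HA : C → C → Prop)
  (ρ : V → V → C) (𝔉 : Set (Set (V × V)))

lemma obs_finite (x : ℕ → V) (n : ℕ) : (obstructions HA ρ x n).Finite :=
  (Set.finite_Iio n).subset (fun i hi => hi.2.1)

lemma obs_mono (x : ℕ → V) (n : ℕ) :
    obstructions HA ρ x n ⊆ obstructions HA ρ x (n + 1) :=
  fun i hi => ⟨hi.1, Nat.lt_succ_of_lt hi.2.1, hi.2.2⟩

variable (hpart : IsHClassPartition DA HA ρ 𝔉)

include hpart in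
lemma classU {F G : Set (V × V)} {u v : V} (hF : F ∈ 𝔉) (hG : G ∈ 𝔉)
    (h1 : (u, v) ∈ F) (h2 : (u, v) ∈ G) : F = G := by
  obtain ⟨F₀, _, huniq⟩ := hpart.2.1 u v ((hpart.1 F hF).2 (u, v) h1)
  rw [huniq F ⟨hF, h1⟩, huniq G ⟨hG, h2⟩]

include hpart in
lemma haIff {F G : Set (V × V)} {u v w : V} (hF : F ∈ 𝔉) (hG : G ∈ 𝔉)
    (h1 : (u, v) ∈ F) (h2 : (v, w) ∈ G) : HA (ρ u v) (ρ v w) ↔ F = G := by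
  have d1 : DA u v := (hpart.1 F hF).2 (u, v) h1
  have d2 : DA v w := (hpart.1 G hG).2 (v, w) h2
  constructor
  · intro hHA
    obtain ⟨F₁, hF₁, ha, hb⟩ := (hpart.2.2 u v w d1 d2).mp hHA
    exact (classU DA HA ρ 𝔉 hpart hF hF₁ h1 ha).trans
      (classU DA HA ρ 𝔉 hpart hF₁ hG hb h2)
  · intro h
    exact (hpart.2.2 u v w d1 d2).mpr ⟨F, hF, h1, h ▸ h2⟩

variable (hloopless : ∀ a : V, ¬ DA a a)
  (hstrong : ∀ F ∈ 𝔉, StronglyConnectedOn (memRel F) (classVerts F))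

include hpart hloopless hstrong in
lemma inOutArc {F : Set (V × V)} (hF : F ∈ 𝔉) {v : V} (hv : v ∈ classVerts F) :
    (∃ s, (s, v) ∈ F) ∧ (∃ t, (v, t) ∈ F) := by
  obtain ⟨p, hp⟩ := (hpart.1 F hF).1
  have hpd : DA p.1 p.2 := (hpart.1 F hF).2 p hp
  have hne : p.1 ≠ p.2 := fun h => hloopless p.2 (h ▸ hpd)
  -- pick y ∈ classVerts F with y ≠ v
  obtain ⟨y, hy, hyv⟩ : ∃ y ∈ classVerts F, y ≠ v := by
    by_cases h : p.1 = v
    · exact ⟨p.2, ⟨p.1, Or.inr (by simpa using hp)⟩, fun hh => hne (h.trans hh.symm)⟩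
    · exact ⟨p.1, ⟨p.2, Or.inl (by simpa using hp)⟩, h⟩
  constructor
  · obtain ⟨x, n, ⟨hw, _⟩, hx0, hxn⟩ := hstrong F hF y hy v hv
    have hn : 1 ≤ n := by
      by_contra h
      have hn0 : n = 0 := by omega
      rw [hn0] at hxn
      exact hyv (hx0.symm.trans hxn)
    have h1 := hw (n - 1) (by omega)
    rw [Nat.sub_add_cancel hn, hxn] at h1
    exact ⟨x (n - 1), h1⟩
  · obtain ⟨x, n, ⟨hw, _⟩, hx0, hxn⟩ := hstrong F hF v hv y hy
    have hn : 1 ≤ n := by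
      by_contra h
      have hn0 : n = 0 := by omega
      rw [hn0] at hxn
      exact hyv (hx0.symm.trans hxn).symm
    have h1 := hw 0 hn
    rw [hx0] at h1
    exact ⟨x 1, h1⟩

include hpart hloopless hstrong in
lemma symCRel {F G : Set (V × V)} (h : CRel 𝔉 F G) : CRel 𝔉 G F := by
  obtain ⟨hF, hG, a, v, w, h1, h2⟩ := h
  have hvF : v ∈ classVerts F := ⟨a, Or.inr h1⟩
  have hvG : v ∈ classVerts G := ⟨w, Or.inl h2⟩
  obtain ⟨-, t, ht⟩ := inOutArc DA HA ρ 𝔉 hpart hloopless hstrong hF hvF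
  obtain ⟨⟨s, hs⟩, -⟩ := inOutArc DA HA ρ 𝔉 hpart hloopless hstrong hG hvG
  exact ⟨hG, hF, s, v, t, hs, ht⟩

include hpart hloopless hstrong in
lemma walkInClass {F : Set (V × V)} (hF : F ∈ 𝔉) {u v : V}
    (hu : u ∈ classVerts F) (hv : v ∈ classVerts F) :
    ∃ x n, 1 ≤ n ∧ IsWalk (memRel F) x n ∧ x 0 = u ∧ x n = v := by
  by_cases huv : u = v
  · obtain ⟨⟨s, hs⟩, -⟩ := inOutArc DA HA ρ 𝔉 hpart hloopless hstrong hF hv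
    have hsF : s ∈ classVerts F := ⟨v, Or.inl hs⟩
    obtain ⟨x, t, ⟨hw, _⟩, hx0, hxt⟩ := hstrong F hF u hu s hsF
    refine ⟨fun i => if i ≤ t then x i else v, t + 1, by omega, ?_, by simp [hx0], by
      simp⟩
    intro i hi
    rcases Nat.lt_or_ge i t with h | h
    · have h1 : i ≤ t := by omega
      have h2 : i + 1 ≤ t := by omega
      simpa [h1, h2] using hw i h
    · have hit : i = t := by omega
      subst hit
      simpa [hxt, memRel] using hs
  · obtain ⟨x, n, ⟨hw, _⟩, hx0, hxn⟩ := hstrong F hF u hu v hv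
    have hn : 1 ≤ n := by
      by_contra h
      have hn0 : n = 0 := by omega
      rw [hn0] at hxn
      exact huv (hx0.symm.trans hxn)
    exact ⟨x, n, hn, hw, hx0, hxn⟩

include hpart in
lemma classWalkDA {F : Set (V × V)} (hF : F ∈ 𝔉) {x : ℕ → V} {n : ℕ}
    (hw : IsWalk (memRel F) x n) :
    IsWalk DA x n ∧ obstructions HA ρ x n = ∅ := by
  refine ⟨fun i hi => (hpart.1 F hF).2 _ (hw i hi), ?_⟩
  ext i
  simp only [obstructions, Set.mem_setOf_eq, Set.mem_empty_iff_false, iff_false, not_and]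
  intro h1 h2 hHA
  have ha : (x (i - 1), x i) ∈ F := by
    have := hw (i - 1) (by omega)
    rwa [Nat.sub_add_cancel h1] at this
  have hb : (x i, x (i + 1)) ∈ F := hw i h2
  exact hHA ((haIff DA HA ρ 𝔉 hpart hF hF ha hb).mpr rfl)

include hpart in
lemma classOfArc {u v : V} (h : DA u v) : ∃ F ∈ 𝔉, (u, v) ∈ F :=
  (hpart.2.1 u v h).exists

-- Build a class-digraph walk from a D-walk, of length at most the number of obstructions.
include hpart in
lemma indKey : ∀ n (x : ℕ → V), IsWalk DA x (n + 1) →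
    ∀ F G, F ∈ 𝔉 → G ∈ 𝔉 → (x 0, x 1) ∈ F → (x n, x (n + 1)) ∈ G →
    ∃ c m, IsWalk (CRel 𝔉) c m ∧ c 0 = F ∧ c m = G ∧
      m ≤ (obstructions HA ρ x (n + 1)).ncard := by
  intro n
  induction n with
  | zero =>
    intro x hw F G hF hG h1 h2
    exact ⟨fun _ => F, 0, fun i hi => absurd hi (by omega), rfl,
      classU DA HA ρ 𝔉 hpart hF hG h1 h2, by omega⟩
  | succ n ih =>
    intro x hw F G hF hG h1 h2
    have hw' : IsWalk DA x (n + 1) := fun i hi => hw i (by omega)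
    obtain ⟨F', hF', hmemF'⟩ := classOfArc DA HA ρ 𝔉 hpart (hw' n (by omega))
    obtain ⟨c, m, hc, hc0, hcm, hmle⟩ := ih x hw' F F' hF hF' h1 hmemF'
    by_cases hFG : F' = G
    · exact ⟨c, m, hc, hc0, hcm.trans hFG,
        hmle.trans (Set.ncard_le_ncard (obs_mono HA ρ x (n + 1))
          (obs_finite HA ρ x (n + 2)))⟩
    · have hobs : (n + 1) ∈ obstructions HA ρ x (n + 2) := by
        refine ⟨by omega, by omega, fun hHA => ?_⟩
        have : (x n, x (n + 1)) ∈ F' := hmemF'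
        have heq := (haIff DA HA ρ 𝔉 hpart hF' hG
          (by simpa using hmemF') (by simpa using h2)).mp (by simpa using hHA)
        exact hFG heq
      have hnot : (n + 1) ∉ obstructions HA ρ x (n + 1) := fun h => by
        have := h.2.1; omega
      have hsub : insert (n + 1) (obstructions HA ρ x (n + 1)) ⊆
          obstructions HA ρ x (n + 2) := by
        intro i hi
        rcases hi with h | h
        · exact h ▸ hobs
        · exact obs_mono HA ρ x (n + 1) h
      have hcard : m + 1 ≤ (obstructions HA ρ x (n + 2)).ncard := by
        have h1' := Set.ncard_insert_of_notMem hnot (obs_finite HA ρ x (n + 1))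
        have h2' := Set.ncard_le_ncard hsub (obs_finite HA ρ x (n + 2))
        omega
      refine ⟨fun i => if i ≤ m then c i else G, m + 1, ?_, by simp [hc0], by simp, hcard⟩
      intro i hi
      rcases Nat.lt_or_ge i m with h | h
      · have e1 : i ≤ m := by omega
        have e2 : i + 1 ≤ m := by omega
        simpa [e1, e2] using hc i h
      · have him : i = m := by omega
        subst him
        simp only [le_refl, if_pos, if_neg (by omega : ¬ i + 1 ≤ i)]
        exact ⟨hcm ▸ hF', hG, x n, x (n + 1), x (n + 2), hcm ▸ hmemF', h2⟩

-- Absorbency: follow a class-digraph walk, picking up at most one obstruction per step.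
include hpart hloopless hstrong in
lemma absorbKey (xc : Set (V × V) → V) (hxc : ∀ F ∈ 𝔉, xc F ∈ classVerts F) :
    ∀ m (c : ℕ → Set (V × V)), IsWalk (CRel 𝔉) c m → c 0 ∈ 𝔉 →
    ∀ u ∈ classVerts (c 0),
    ∃ x n, 1 ≤ n ∧ IsWalk DA x n ∧ x 0 = u ∧ x n = xc (c m) ∧
      (obstructions HA ρ x n).ncard ≤ m ∧ (x 0, x 1) ∈ c 0 := by
  intro m
  induction m with
  | zero =>
    intro c _ hc0 u hu
    obtain ⟨x, n, hn, hw, hx0, hxn⟩ := walkInClass DA HA ρ 𝔉 hpart hloopless hstrong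
      hc0 hu (hxc (c 0) hc0)
    obtain ⟨hDA, hobs⟩ := classWalkDA DA HA ρ 𝔉 hpart hc0 hw
    exact ⟨x, n, hn, hDA, hx0, hxn, by simp [hobs], hw 0 hn⟩
  | succ m ih =>
    intro c hc hc0 u hu
    obtain ⟨-, hc1, a, v, w, havF, hvwG⟩ := hc 0 (by omega)
    have hvF : v ∈ classVerts (c 0) := ⟨a, Or.inr havF⟩
    obtain ⟨q, nq, hnq, hqw, hq0, hqn⟩ := walkInClass DA HA ρ 𝔉 hpart hloopless hstrong
      hc0 hu hvF
    obtain ⟨hqDA, hqobs⟩ := classWalkDA DA HA ρ 𝔉 hpart hc0 hqw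
    have hwG : w ∈ classVerts (c 1) := ⟨v, Or.inr hvwG⟩
    obtain ⟨r, nr, hnr, hrDA, hr0, hrn, hrcard, hrfirst⟩ :=
      ih (fun i => c (i + 1)) (fun i hi => hc (i + 1) (by omega)) hc1 w hwG
    set N := nq + 1 + nr with hN
    set t : ℕ → V := fun i => if i ≤ nq then q i else r (i - (nq + 1)) with ht
    have htq : ∀ i, i ≤ nq → t i = q i := by
      intro i hi
      simp only [ht]
      rw [if_pos hi]
    have htr : ∀ i, nq + 1 ≤ i → t i = r (i - (nq + 1)) := by
      intro i hi
      simp only [ht]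
      rw [if_neg (by omega : ¬ i ≤ nq)]
    have htDA : IsWalk DA t N := by
      intro i hi
      rcases Nat.lt_trichotomy i nq with h | h | h
      · rw [htq i (by omega), htq (i + 1) (by omega)]
        exact hqDA i h
      · subst h
        rw [htq i le_rfl, htr (i + 1) (by omega)]
        simp only [Nat.add_sub_cancel_left, hqn]
        have : r (i + 1 - (i + 1)) = r 0 := by congr 1; omega
        rw [(by omega : i + 1 - (i + 1) = 0), hr0]
        exact (hpart.1 (c 1) hc1).2 _ hvwG
      · rw [htr i (by omega), htr (i + 1) (by omega)]
        have : i + 1 - (nq + 1) = (i - (nq + 1)) + 1 := by omega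
        rw [this]
        exact hrDA (i - (nq + 1)) (by omega)
    have hobs : obstructions HA ρ t N ⊆
        insert nq ((fun j => j + (nq + 1)) '' obstructions HA ρ r nr) := by
      intro i hi
      obtain ⟨hi1, hi2, hiHA⟩ := hi
      rcases Nat.lt_trichotomy i nq with h | h | h
      · exfalso
        apply hiHA
        have e1 : t (i - 1) = q (i - 1) := htq _ (by omega)
        have e2 : t i = q i := htq _ (by omega)
        have e3 : t (i + 1) = q (i + 1) := htq _ (by omega)
        rw [e1, e2, e3]
        have ha' : (q (i - 1), q i) ∈ c 0 := by
          have := hqw (i - 1) (by omega)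
          rwa [Nat.sub_add_cancel hi1] at this
        exact (haIff DA HA ρ 𝔉 hpart hc0 hc0 ha' (hqw i h)).mpr rfl
      · exact Or.inl h
      · rcases Nat.eq_or_lt_of_le h with h' | h'
        · exfalso
          apply hiHA
          have e1 : t (i - 1) = q nq := by rw [htq _ (by omega)]; congr 1; omega
          have e2 : t i = r 0 := by rw [htr _ (by omega)]; congr 1; omega
          have e3 : t (i + 1) = r 1 := by rw [htr _ (by omega)]; congr 1; omega
          rw [e1, e2, e3, hqn, hr0]
          exact (haIff DA HA ρ 𝔉 hpart hc1 hc1 hvwG (hr0 ▸ hrfirst)).mpr rfl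
        · refine Or.inr ⟨i - (nq + 1), ⟨by omega, by omega, ?_⟩, by
            show i - (nq + 1) + (nq + 1) = i
            omega⟩
          intro hHA
          apply hiHA
          have e1 : t (i - 1) = r (i - (nq + 1) - 1) := by
            rw [htr _ (by omega)]; congr 1; omega
          have e2 : t i = r (i - (nq + 1)) := htr _ (by omega)
          have e3 : t (i + 1) = r (i - (nq + 1) + 1) := by
            rw [htr _ (by omega)]; congr 1; omega
          rw [e1, e2, e3]; exact hHA
    have hcard : (obstructions HA ρ t N).ncard ≤ m + 1 := by
      have hfin : ((fun j => j + (nq + 1)) '' obstructions HA ρ r nr).Finite :=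
        (obs_finite HA ρ r nr).image _
      have h1' := Set.ncard_le_ncard hobs (hfin.insert nq)
      have h2' := Set.ncard_insert_le nq ((fun j => j + (nq + 1)) '' obstructions HA ρ r nr)
      have h3' := Set.ncard_image_le (obs_finite HA ρ r nr)
        (f := fun j => j + (nq + 1))
      omega
    refine ⟨t, N, by omega, htDA, by rw [htq 0 (by omega), hq0], ?_, hcard, ?_⟩
    · rw [htr N (by omega)]
      have : N - (nq + 1) = nr := by omega
      rw [this, hrn]
    · rw [htq 0 (by omega), htq 1 hnq, hq0]
      have := hqw 0 hnq
      rwa [hq0] at this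

include hpart hloopless hstrong in
lemma obsFreeArcs {F : Set (V × V)} (hF : F ∈ 𝔉) {z : V} (hz : z ∈ classVerts F)
    (hobs : ObstructionFree DA HA ρ z) :
    (∀ w, DA z w → (z, w) ∈ F) ∧ (∀ u, DA u z → (u, z) ∈ F) := by
  obtain ⟨⟨s, hs⟩, ⟨t, htt⟩⟩ := inOutArc DA HA ρ 𝔉 hpart hloopless hstrong hF hz
  constructor
  · intro w hw
    have hsz : DA s z := (hpart.1 F hF).2 (s, z) hs
    obtain ⟨F₁, hF₁, ha, hb⟩ := (hpart.2.2 s z w hsz hw).mp (hobs s w hsz hw)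
    exact (classU DA HA ρ 𝔉 hpart hF₁ hF ha hs) ▸ hb
  · intro u hu
    have hzt : DA z t := (hpart.1 F hF).2 (z, t) htt
    obtain ⟨F₁, hF₁, ha, hb⟩ := (hpart.2.2 u z t hu hzt).mp (hobs u t hu hzt)
    exact (classU DA HA ρ 𝔉 hpart hF₁ hF hb htt) ▸ ha

end Aux

/-- Theorem `teostrong2`. Let `D` be an `H`-colored digraph and `𝔉`
an `H`-class partition of `A(D)` such that for every `F ∈ 𝔉` the subdigraph `D⟨F⟩` is
strongly connected and contains an obstruction-free vertex of `D`. Then for every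
`k ≥ 2`, `D` has a `(k,H)`-kernel by walks, i.e. a `(k,k-1,H)`-kernel by walks. -/
theorem stmt0 {V : Type u} {C : Type v}
    (DA : V → V → Prop) (hloopless : ∀ a : V, ¬ DA a a)
    (HA : C → C → Prop) (ρ : V → V → C)
    (𝔉 : Set (Set (V × V)))
    (hpart : IsHClassPartition DA HA ρ 𝔉)
    (hstrong : ∀ F ∈ 𝔉, StronglyConnectedOn (memRel F) (classVerts F))
    (hfree : ∀ F ∈ 𝔉, ∃ x ∈ classVerts F, ObstructionFree DA HA ρ x) :
    ∀ k : ℕ, 2 ≤ k → ∃ S : Set V, klHKernelByWalks DA HA ρ k (k - 1) S := by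
  classical
  intro k hk
  rcases isEmpty_or_nonempty V with hV | hV
  · refine ⟨∅, ?_, ?_⟩
    · intro u _
      exact (IsEmpty.false u).elim
    · intro u _
      exact (IsEmpty.false u).elim
  choose! xc hxc1 hxc2 using hfree
  set P : Set (Set (Set (V × V))) := {S' | S' ⊆ 𝔉 ∧ ∀ F ∈ S', ∀ G ∈ S', F ≠ G →
    ∀ c m, IsWalk (CRel 𝔉) c m → c 0 = F → c m = G → k - 1 ≤ m} with hPdef
  have hchain : ∀ ch ⊆ P, IsChain (· ⊆ ·) ch → ∃ ub ∈ P, ∀ s ∈ ch, s ⊆ ub := by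
    intro ch hchP hchain
    refine ⟨⋃₀ ch, ⟨?_, ?_⟩, fun s hs => Set.subset_sUnion_of_mem hs⟩
    · intro F hF
      obtain ⟨s, hs, hFs⟩ := hF
      exact (hchP hs).1 hFs
    · rintro F ⟨s, hs, hFs⟩ G ⟨t, htc, hGt⟩ hFG c m hc hc0 hcm
      rcases hchain.total hs htc with h | h
      · exact (hchP htc).2 F (h hFs) G hGt hFG c m hc hc0 hcm
      · exact (hchP hs).2 F hFs G (h hGt) hFG c m hc hc0 hcm
  obtain ⟨M, hM⟩ := zorn_subset P hchain
  obtain ⟨hM𝔉, hMind⟩ := hM.prop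
  set S₀ : Set V := {z | ∀ w, ¬ DA z w ∧ ¬ DA w z} with hS₀def
  refine ⟨S₀ ∪ xc '' M, ?_, ?_⟩
  · -- independence
    intro u hu v hv huv x n hw hx0 hxn
    rcases Nat.eq_zero_or_pos n with hn | hn
    · subst hn
      exact absurd (hx0.symm.trans hxn) huv
    obtain ⟨n', rfl⟩ : ∃ n', n = n' + 1 := ⟨n - 1, by omega⟩
    have hu1 : u ∈ xc '' M := by
      rcases hu with h | h
      · have h1 := hw 0 (by omega)
        rw [hx0] at h1
        exact absurd h1 (h (x 1)).1
      · exact h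
    have hv1 : v ∈ xc '' M := by
      rcases hv with h | h
      · have h1 := hw n' (by omega)
        rw [hxn] at h1
        exact absurd h1 (h (x n')).2
      · exact h
    obtain ⟨F, hFM, hFx⟩ := hu1
    obtain ⟨G, hGM, hGx⟩ := hv1
    have hF𝔉 : F ∈ 𝔉 := hM𝔉 hFM
    have hG𝔉 : G ∈ 𝔉 := hM𝔉 hGM
    have hFG : F ≠ G := fun h => huv (hFx ▸ hGx ▸ h ▸ rfl)
    have hfirst : (x 0, x 1) ∈ F := by
      rw [hx0, ← hFx]
      exact (obsFreeArcs DA HA ρ 𝔉 hpart hloopless hstrong hF𝔉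
        (hxc1 F hF𝔉) (hxc2 F hF𝔉)).1 (x 1) (by rw [hFx, ← hx0]; exact hw 0 (by omega))
    have hlast : (x n', x (n' + 1)) ∈ G := by
      rw [hxn, ← hGx]
      exact (obsFreeArcs DA HA ρ 𝔉 hpart hloopless hstrong hG𝔉
        (hxc1 G hG𝔉) (hxc2 G hG𝔉)).2 (x n') (by rw [hGx, ← hxn]; exact hw n' (by omega))
    obtain ⟨c, m, hc, hc0, hcm, hmle⟩ :=
      indKey DA HA ρ 𝔉 hpart n' x hw F G hF𝔉 hG𝔉 hfirst hlast
    have := hMind F hFM G hGM hFG c m hc hc0 hcm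
    unfold hLength
    omega
  · -- absorbency
    intro u hu
    have hu0 : u ∉ S₀ := fun h => hu (Or.inl h)
    have hex : ∃ w, DA u w ∨ DA w u := by
      by_contra h
      push_neg at h
      exact hu0 (fun w => (h w).imp id id)
    obtain ⟨F₀, hF₀𝔉, huF₀⟩ : ∃ F₀ ∈ 𝔉, u ∈ classVerts F₀ := by
      obtain ⟨w, hw | hw⟩ := hex
      · obtain ⟨F₀, hF₀, hmem⟩ := classOfArc DA HA ρ 𝔉 hpart hw
        exact ⟨F₀, hF₀, w, Or.inl hmem⟩
      · obtain ⟨F₀, hF₀, hmem⟩ := classOfArc DA HA ρ 𝔉 hpart hw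
        exact ⟨F₀, hF₀, w, Or.inr hmem⟩
    obtain ⟨G, hGM, c, m, hc, hc0, hcm, hm2⟩ :
        ∃ G ∈ M, ∃ c m, IsWalk (CRel 𝔉) c m ∧ c 0 = F₀ ∧ c m = G ∧ m ≤ k - 2 := by
      by_cases hF₀M : F₀ ∈ M
      · exact ⟨F₀, hF₀M, fun _ => F₀, 0, fun i hi => absurd hi (by omega), rfl, rfl,
          by omega⟩
      · have hnot : insert F₀ M ∉ P :=
          fun h => hF₀M (hM.2 h (Set.subset_insert F₀ M) (Set.mem_insert F₀ M))
        have h1 : insert F₀ M ⊆ 𝔉 := Set.insert_subset hF₀𝔉 hM𝔉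
        have h2 : ¬ ∀ F ∈ insert F₀ M, ∀ G ∈ insert F₀ M, F ≠ G →
            ∀ c m, IsWalk (CRel 𝔉) c m → c 0 = F → c m = G → k - 1 ≤ m :=
          fun h => hnot ⟨h1, h⟩
        push_neg at h2
        obtain ⟨F, hF, G, hG, hFG, c, m, hc, hc0, hcm, hmlt⟩ := h2
        have hm2 : m ≤ k - 2 := by omega
        rcases hF with rfl | hFM
        · rcases hG with rfl | hGM
          · exact absurd rfl hFG
          · exact ⟨G, hGM, c, m, hc, hc0, hcm, hm2⟩
        · rcases hG with rfl | hGM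
          · refine ⟨F, hFM, fun i => c (m - i), m, ?_, by simpa using hcm, by simp [hc0],
              hm2⟩
            intro i hi
            show CRel 𝔉 (c (m - i)) (c (m - (i + 1)))
            have h' := hc (m - i - 1) (by omega)
            have e1 : m - i - 1 + 1 = m - i := by omega
            have e2 : m - (i + 1) = m - i - 1 := by omega
            rw [e1] at h'
            rw [e2]
            exact symCRel DA HA ρ 𝔉 hpart hloopless hstrong h'
          · exact absurd (hMind F hFM G hGM hFG c m hc hc0 hcm) (by omega)
    obtain ⟨x, n, hn, hwDA, hx0, hxn, hcard, -⟩ :=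
      absorbKey DA HA ρ 𝔉 hpart hloopless hstrong xc hxc1 m c hc (hc0 ▸ hF₀𝔉) u
        (hc0 ▸ huF₀)
    refine ⟨xc G, Or.inr ⟨G, hGM, rfl⟩, x, n, hwDA, hx0, by rw [hxn, hcm], ?_⟩
    unfold hLength
    omega
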